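/- Let M be a weighted complete graph on a vertex set containing terminals, let u ≠ v be two terminals, let e = {u,v} be an edge of arbitrary nonnegative cost d(e), and let M_e be M with edge e added (in parallel / with cost possibly smaller). Then for every full component C, save(M, C) ≥ save(M_e, C), where save(M, C) := d(MST(M)) − d(MST(M/C)) and M/C denotes the contraction of the terminal set of C in M (equivalently, adding zero-cost edges between all pairs of terminals of C). -/

import Mathlib

open Finset SimpleGraph

variable {V : Type*} [Fintype V] [DecidableEq V]

/-- Total cost of a finite set of edges. -/
def edgeCost (w : Sym2 V → ℝ) (T : Finset (Sym2 V)) : ℝ := ∑ e ∈ T, w e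

/-- `T` is the edge set of a tree spanning exactly the vertex set `A`. -/
def IsTreeOn (A : Finset V) (T : Finset (Sym2 V)) : Prop :=
  (∀ e ∈ T, ∀ x ∈ e, x ∈ A) ∧ (∀ e ∈ T, ¬ e.IsDiag) ∧ T.card + 1 = A.card ∧
    ∀ u ∈ A, ∀ v ∈ A, (SimpleGraph.fromEdgeSet (↑T : Set (Sym2 V))).Reachable u v

/-- Cost of a minimum spanning tree on vertex set `A` of the complete graph weighted by `w`. -/
noncomputable def mstCostOn (w : Sym2 V → ℝ) (A : Finset V) : ℝ :=
  sInf (edgeCost w '' {T | IsTreeOn A T})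

/-- All (non-loop) pairs inside `S`. -/
def Rpairs (S : Finset V) : Set (Sym2 V) := {e | ∃ u ∈ S, ∃ v ∈ S, u ≠ v ∧ e = s(u, v)}

open Classical in
/-- Contracting the vertex set `S`: add zero-cost edges between all pairs of `S`. -/
noncomputable def contractWeight (w : Sym2 V → ℝ) (S : Finset V) : Sym2 V → ℝ :=
  fun e => if e ∈ Rpairs S then 0 else w e

/-- `save(M, C)` where `M` is the complete graph on `A` weighted by `w` and
`S` is the terminal set of the full component `C`. -/
noncomputable def saveOn (w : Sym2 V → ℝ) (A S : Finset V) : ℝ :=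
  mstCostOn w A - mstCostOn (contractWeight w S) A

/-- Vertices touched by an edge set. -/
def supportOf (T : Finset (Sym2 V)) : Finset V :=
  Finset.univ.filter (fun v => ∃ e ∈ T, v ∈ e)

/-- Degree of `v` in the edge set `T`. -/
def degIn (T : Finset (Sym2 V)) (v : V) : ℕ := (T.filter (fun e => v ∈ e)).card

/-- `E` is a full component with vertex set `S` and terminal set `R`:
a tree on `S` whose set of leaves is exactly `R`. -/
def IsFullComponent (R S : Finset V) (E : Finset (Sym2 V)) : Prop :=
  IsTreeOn S E ∧ R ⊆ S ∧ ∀ v ∈ S, (degIn E v = 1 ↔ v ∈ R)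

/-- The terminals of the component with edge set `E'` w.r.t. the global terminal set `R`. -/
def compR (R : Finset V) (E' : Finset (Sym2 V)) : Finset V := supportOf E' ∩ R

/-- `E'` is a full component w.r.t. the terminal set `R`. -/
def IsFullComponentOf (R : Finset V) (E' : Finset (Sym2 V)) : Prop :=
  IsFullComponent (compR R E') (supportOf E') E'

/-- A Steiner tree for terminal set `R`: a tree containing all terminals. -/
def IsSteinerTree (R : Finset V) (T : Finset (Sym2 V)) : Prop :=
  IsTreeOn (supportOf T ∪ R) T

/-- `P` is a decomposition of the Steiner tree `T` into full components,
each with at most `k` terminals. -/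
def KDecomposition (k : ℕ) (R : Finset V) (T : Finset (Sym2 V))
    (P : Finset (Finset (Sym2 V))) : Prop :=
  (∀ E' ∈ P, IsFullComponentOf R E' ∧ (compR R E').card ≤ k) ∧
  (∀ e ∈ T, ∃! E', E' ∈ P ∧ e ∈ E') ∧ (∀ E' ∈ P, E' ⊆ T)

/-- `T` is a `k`-restricted Steiner tree. -/
def IsKRestricted (k : ℕ) (R : Finset V) (T : Finset (Sym2 V)) : Prop :=
  ∃ P, KDecomposition k R T P


set_option linter.unusedSectionVars false
set_option linter.unusedVariables false

section SaveAux

variable {V : Type*} [DecidableEq V]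

/-- Reachability in the graph with edge set `T`. -/
def reachT (T : Finset (Sym2 V)) (x y : V) : Prop :=
  Relation.ReflTransGen (fun a b => s(a, b) ∈ T ∧ a ≠ b) x y

lemma reachT.refl {T : Finset (Sym2 V)} {x : V} : reachT T x x := Relation.ReflTransGen.refl

lemma reachT.symm {T : Finset (Sym2 V)} {x y : V} (h : reachT T x y) : reachT T y x := by
  refine @Std.Symm.symm _ _ (@Relation.ReflTransGen.stdSymm _ _ ⟨?_⟩) _ _ h
  rintro a b ⟨h1, h2⟩
  exact ⟨by rwa [Sym2.eq_swap], h2.symm⟩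

lemma reachT.trans {T : Finset (Sym2 V)} {x y z : V} (h : reachT T x y) (h' : reachT T y z) :
    reachT T x z := Relation.ReflTransGen.trans h h'

lemma reachT.mono {T T' : Finset (Sym2 V)} (hTT : T ⊆ T') {x y : V} (h : reachT T x y) :
    reachT T' x y := by
  refine Relation.ReflTransGen.mono ?_ _ _ h
  rintro a b ⟨h1, h2⟩
  exact ⟨hTT h1, h2⟩

lemma reachT_iff {T : Finset (Sym2 V)} {x y : V} :
    reachT T x y ↔ (fromEdgeSet (↑T : Set (Sym2 V))).Reachable x y := by
  rw [SimpleGraph.reachable_iff_reflTransGen]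
  constructor <;> refine fun h => Relation.ReflTransGen.mono ?_ _ _ h <;> intro a b
  · rintro ⟨h1, h2⟩
    exact (SimpleGraph.fromEdgeSet_adj _).2 ⟨h1, h2⟩
  · intro h
    rw [SimpleGraph.fromEdgeSet_adj] at h
    exact ⟨h.1, h.2⟩

/-- Splitting lemma: a walk either avoids the erased edge or decomposes across it. -/
lemma reachT_erase (T : Finset (Sym2 V)) (a b : V) {z y : V} (h : reachT T z y) :
    reachT (T.erase s(a, b)) z y ∨
      (reachT (T.erase s(a, b)) z a ∧ reachT (T.erase s(a, b)) b y) ∨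
      (reachT (T.erase s(a, b)) z b ∧ reachT (T.erase s(a, b)) a y) := by
  induction h with
  | refl => exact Or.inl .refl
  | tail h1 h2 ih =>
    rename_i m c
    obtain ⟨hmem, hne⟩ := h2
    by_cases hx : s(m, c) = s(a, b)
    · rw [Sym2.eq_iff] at hx
      rcases hx with ⟨rfl, rfl⟩ | ⟨rfl, rfl⟩
      · rcases ih with h | ⟨h3, h4⟩ | ⟨h3, h4⟩
        · exact Or.inr (Or.inl ⟨h, .refl⟩)
        · exact Or.inr (Or.inl ⟨h3, .refl⟩)
        · exact Or.inl h3
      · rcases ih with h | ⟨h3, h4⟩ | ⟨h3, h4⟩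
        · exact Or.inr (Or.inr ⟨h, .refl⟩)
        · exact Or.inl h3
        · exact Or.inr (Or.inr ⟨h3, .refl⟩)
    · have hstep : s(m, c) ∈ T.erase s(a, b) ∧ m ≠ c := ⟨Finset.mem_erase.2 ⟨hx, hmem⟩, hne⟩
      rcases ih with h | ⟨h3, h4⟩ | ⟨h3, h4⟩
      · exact Or.inl (h.tail hstep)
      · exact Or.inr (Or.inl ⟨h3, h4.tail hstep⟩)
      · exact Or.inr (Or.inr ⟨h3, h4.tail hstep⟩)

/-- Walks from `p` stay inside the set of edges all of whose endpoints are reachable from `p`. -/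
lemma reachT_restrict {T T' : Finset (Sym2 V)} {p : V}
    (hT' : ∀ x ∈ T, (∀ y ∈ x, reachT T p y) → x ∈ T') {z : V} (h : reachT T p z) :
    reachT T' p z := by
  induction h with
  | refl => exact .refl
  | tail h1 h2 ih =>
    rename_i m c
    obtain ⟨hmem, hne⟩ := h2
    have hmc : reachT T p c := h1.tail ⟨hmem, hne⟩
    refine ih.tail ⟨hT' _ hmem ?_, hne⟩
    intro y hy
    rw [Sym2.mem_iff] at hy
    rcases hy with rfl | rfl
    · exact h1
    · exact hmc

/-- Walks from `q`, when `q` is not reachable from `p`, stay inside the edges all of whose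
endpoints are non-reachable from `p`. -/
lemma reachT_restrict_not {T T' : Finset (Sym2 V)} {p q : V} (hpq : ¬ reachT T p q)
    (hT' : ∀ x ∈ T, (∀ y ∈ x, ¬ reachT T p y) → x ∈ T') {z : V} (h : reachT T q z) :
    reachT T' q z ∧ ¬ reachT T p z := by
  induction h with
  | refl => exact ⟨.refl, hpq⟩
  | tail h1 h2 ih =>
    rename_i m c
    obtain ⟨hmem, hne⟩ := h2
    obtain ⟨ih1, ih2⟩ := ih
    have hc : ¬ reachT T p c := by
      intro hcon
      exact ih2 (hcon.tail ⟨by rwa [Sym2.eq_swap], hne.symm⟩)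
    refine ⟨ih1.tail ⟨hT' _ hmem ?_, hne⟩, hc⟩
    intro y hy
    rw [Sym2.mem_iff] at hy
    rcases hy with rfl | rfl
    · exact ih2
    · exact hc

/-- A connected graph on `A` has at least `A.card - 1` edges. -/
lemma card_le_of_reach (T : Finset (Sym2 V)) :
    ∀ (A : Finset V) (a : V), a ∈ A → (∀ e ∈ T, ∀ x ∈ e, x ∈ A) →
      (∀ z ∈ A, reachT T a z) → A.card ≤ T.card + 1 := by
  classical
  induction T using Finset.strongInduction with
  | _ T ih =>
    intro A a ha hE hR
    rcases T.eq_empty_or_nonempty with rfl | ⟨e, he⟩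
    · have hA : ∀ z ∈ A, z = a := by
        intro z hz
        rcases (hR z hz).symm.cases_head with h | ⟨c, ⟨hc, _⟩, _⟩
        · exact h
        · simp at hc
      have : A ⊆ {a} := fun z hz => Finset.mem_singleton.2 (hA z hz)
      simpa using Finset.card_le_card this
    · induction e using Sym2.ind with
    | _ p q =>
      have hpA : p ∈ A := hE _ he p (Sym2.mem_mk_left p q)
      have hqA : q ∈ A := hE _ he q (Sym2.mem_mk_right p q)
      set T₀ := T.erase s(p, q) with hT₀
      have hT₀sub : T₀ ⊂ T := Finset.erase_ssubset he
      have hcardT : T.card = T₀.card + 1 := by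
        rw [hT₀, Finset.card_erase_of_mem he]
        have := Finset.card_pos.2 ⟨_, he⟩
        omega
      have hdich : ∀ z ∈ A, reachT T₀ p z ∨ reachT T₀ q z := by
        intro z hz
        have hpz : reachT T p z := (hR p hpA).symm.trans (hR z hz)
        rcases reachT_erase T p q hpz with h | ⟨_, h⟩ | ⟨_, h⟩
        · exact Or.inl h
        · exact Or.inr h
        · exact Or.inl h
      by_cases hq : reachT T₀ p q
      · have hall : ∀ z ∈ A, reachT T₀ p z := by
          intro z hz
          rcases hdich z hz with h | h
          · exact h
          · exact hq.trans h
        have := ih T₀ hT₀sub A p hpA (fun e' he' => hE e' (Finset.mem_of_mem_erase he')) hall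
        omega
      · set A₁ := A.filter (fun z => reachT T₀ p z) with hA₁
        set A₂ := A.filter (fun z => ¬ reachT T₀ p z) with hA₂
        set T₁ := T₀.filter (fun x => ∀ y ∈ x, reachT T₀ p y) with hT₁
        set T₂ := T₀.filter (fun x => ¬ ∀ y ∈ x, reachT T₀ p y) with hT₂
        have hT₁sub : T₁ ⊂ T := (Finset.filter_subset _ _).trans_ssubset hT₀sub
        have hT₂sub : T₂ ⊂ T := (Finset.filter_subset _ _).trans_ssubset hT₀sub
        -- every edge of T₂ has both endpoints non-reachable from p
        have hT₂end : ∀ x ∈ T₂, ∀ y ∈ x, ¬ reachT T₀ p y := by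
          intro x hx
          rw [hT₂, Finset.mem_filter] at hx
          obtain ⟨hx0, hxn⟩ := hx
          induction x using Sym2.ind with
          | _ m c =>
            have hone : ¬ reachT T₀ p m ∨ ¬ reachT T₀ p c := by
              by_contra hcon
              push_neg at hcon
              exact hxn (fun y hy => by
                rw [Sym2.mem_iff] at hy
                rcases hy with rfl | rfl
                · exact hcon.1
                · exact hcon.2)
            have hboth : ¬ reachT T₀ p m ∧ ¬ reachT T₀ p c := by
              rcases hone with h | h
              · refine ⟨h, fun hc => ?_⟩
                by_cases hmc : m = c
                · exact h (hmc ▸ hc)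
                · exact h (hc.tail ⟨by rwa [Sym2.eq_swap], Ne.symm hmc⟩)
              · refine ⟨fun hm => ?_, h⟩
                by_cases hmc : m = c
                · exact h (hmc ▸ hm)
                · exact h (hm.tail ⟨hx0, hmc⟩)
            intro y hy
            rw [Sym2.mem_iff] at hy
            rcases hy with rfl | rfl
            · exact hboth.1
            · exact hboth.2
        have h1 : A₁.card ≤ T₁.card + 1 := by
          refine ih T₁ hT₁sub A₁ p (Finset.mem_filter.2 ⟨hpA, .refl⟩) ?_ ?_
          · intro x hx y hy
            rw [hT₁, Finset.mem_filter] at hx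
            exact Finset.mem_filter.2 ⟨hE x (Finset.mem_of_mem_erase hx.1) y hy, hx.2 y hy⟩
          · intro z hz
            rw [hA₁, Finset.mem_filter] at hz
            exact reachT_restrict (fun x hx hxr => Finset.mem_filter.2 ⟨hx, hxr⟩) hz.2
        have h2 : A₂.card ≤ T₂.card + 1 := by
          refine ih T₂ hT₂sub A₂ q (Finset.mem_filter.2 ⟨hqA, hq⟩) ?_ ?_
          · intro x hx y hy
            exact Finset.mem_filter.2
              ⟨hE x (Finset.mem_of_mem_erase (Finset.mem_filter.1 hx).1) y hy, hT₂end x hx y hy⟩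
          · intro z hz
            rw [hA₂, Finset.mem_filter] at hz
            have hqz : reachT T₀ q z := by
              rcases hdich z hz.1 with h | h
              · exact absurd h hz.2
              · exact h
            refine (reachT_restrict_not hq ?_ hqz).1
            intro x hx hxn
            refine Finset.mem_filter.2 ⟨hx, fun hall => ?_⟩
            induction x using Sym2.ind with
            | _ m c => exact hxn m (Sym2.mem_mk_left m c) (hall m (Sym2.mem_mk_left m c))
        have hApart : A₁.card + A₂.card = A.card :=
          Finset.card_filter_add_card_filter_not (fun z => reachT T₀ p z)
        have hTpart : T₁.card + T₂.card = T₀.card :=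
          Finset.card_filter_add_card_filter_not (fun x => ∀ y ∈ x, reachT T₀ p y)
        omega

end SaveAux
set_option linter.unusedSectionVars false

section SaveAux2

variable {V : Type*} [DecidableEq V]

/-- A path from inside `W` to outside `W` crosses the boundary, splitting the path. -/
lemma walk_cross {G : SimpleGraph V} (W : V → Prop) {u v : V} (p : G.Walk u v) :
    p.IsPath → W u → ¬ W v →
    ∃ a b, W a ∧ ¬ W b ∧ G.Adj a b ∧ s(a, b) ∈ p.edges ∧
      (∃ q : G.Walk u a, s(a, b) ∉ q.edges) ∧ (∃ r : G.Walk b v, s(a, b) ∉ r.edges) := by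
  induction p with
  | nil => exact fun _ hu hv => absurd hu hv
  | @cons u m v h2 p ih =>
    intro hp hu hv
    rw [SimpleGraph.Walk.cons_isPath_iff] at hp
    by_cases hm : W m
    · obtain ⟨a, b, ha, hb, hadj, hedges, ⟨q, hq⟩, ⟨r, hr⟩⟩ := ih hp.1 hm hv
      have hne : s(a, b) ≠ s(u, m) := by
        intro hcon
        exact hp.2 (SimpleGraph.Walk.fst_mem_support_of_mem_edges p (hcon ▸ hedges))
      refine ⟨a, b, ha, hb, hadj, ?_, ⟨SimpleGraph.Walk.cons h2 q, ?_⟩, ⟨r, hr⟩⟩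
      · rw [SimpleGraph.Walk.edges_cons]
        exact List.mem_cons_of_mem _ hedges
      · rw [SimpleGraph.Walk.edges_cons]
        simp only [List.mem_cons, not_or]
        exact ⟨hne, hq⟩
    · refine ⟨u, m, hu, hm, h2, ?_, ⟨SimpleGraph.Walk.nil, by simp⟩, ⟨p, ?_⟩⟩
      · rw [SimpleGraph.Walk.edges_cons]
        exact List.mem_cons_self
      · intro hcon
        exact hp.2 (SimpleGraph.Walk.fst_mem_support_of_mem_edges p hcon)

lemma reachT_of_walk_avoid {T : Finset (Sym2 V)} {x : Sym2 V} {a b : V}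
    (q : (SimpleGraph.fromEdgeSet (↑T : Set (Sym2 V))).Walk a b) (hq : x ∉ q.edges) :
    reachT (T.erase x) a b := by
  induction q with
  | nil => exact .refl
  | @cons a m b h p ih =>
    rw [SimpleGraph.Walk.edges_cons] at hq
    simp only [List.mem_cons, not_or] at hq
    rw [SimpleGraph.fromEdgeSet_adj] at h
    refine Relation.ReflTransGen.head ⟨Finset.mem_erase.2 ⟨?_, h.1⟩, h.2⟩ (ih hq.2)
    intro hcon
    exact hq.1 hcon.symm

lemma exchange_cross {T : Finset (Sym2 V)} {u v : V} (h : reachT T u v)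
    (W : V → Prop) (hu : W u) (hv : ¬ W v) :
    ∃ a b, W a ∧ ¬ W b ∧ a ≠ b ∧ s(a, b) ∈ T ∧
      reachT (T.erase s(a, b)) u a ∧ reachT (T.erase s(a, b)) b v := by
  obtain ⟨p0⟩ := reachT_iff.1 h
  obtain ⟨a, b, ha, hb, hadj, _, ⟨q, hq⟩, ⟨r, hr⟩⟩ :=
    walk_cross W p0.toPath.1 p0.toPath.2 hu hv
  rw [SimpleGraph.fromEdgeSet_adj] at hadj
  exact ⟨a, b, ha, hb, hadj.2, hadj.1, reachT_of_walk_avoid q hq, reachT_of_walk_avoid r hr⟩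

end SaveAux2
section SaveAux3

variable {V : Type*} [Fintype V] [DecidableEq V]

lemma isTreeOn_of_base {A : Finset V} {T : Finset (Sym2 V)} {a : V} (ha : a ∈ A)
    (hend : ∀ e ∈ T, ∀ x ∈ e, x ∈ A) (hdiag : ∀ e ∈ T, ¬ e.IsDiag)
    (hcard : T.card + 1 = A.card) (hbase : ∀ z ∈ A, reachT T a z) : IsTreeOn A T :=
  ⟨hend, hdiag, hcard, fun x hx y hy =>
    reachT_iff.1 ((hbase x hx).symm.trans (hbase y hy))⟩

lemma IsTreeOn.reachT {A : Finset V} {T : Finset (Sym2 V)} (hT : IsTreeOn A T)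
    {x y : V} (hx : x ∈ A) (hy : y ∈ A) : reachT T x y :=
  reachT_iff.2 (hT.2.2.2 x hx y hy)

/-- Removing a tree edge disconnects its endpoints. -/
lemma not_reachT_erase {A : Finset V} {T : Finset (Sym2 V)} (hT : IsTreeOn A T)
    {p q : V} (hpq : p ≠ q) (he : s(p, q) ∈ T) : ¬ reachT (T.erase s(p, q)) p q := by
  intro h
  have hpA : p ∈ A := hT.1 _ he p (Sym2.mem_mk_left p q)
  have hall : ∀ z ∈ A, reachT (T.erase s(p, q)) p z := by
    intro z hz
    rcases reachT_erase T p q (hT.reachT hpA hz) with h' | ⟨_, h'⟩ | ⟨_, h'⟩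
    · exact h'
    · exact h.trans h'
    · exact h'
  have hle := card_le_of_reach (T.erase s(p, q)) A p hpA
    (fun e' he' => hT.1 e' (Finset.mem_of_mem_erase he')) hall
  have h1 := Finset.card_erase_of_mem he
  have h2 := Finset.card_pos.2 ⟨_, he⟩
  have h3 := hT.2.2.1
  omega

/-- The key exchange lemma between two spanning trees. -/
lemma tree_exchange {A : Finset V} {T1 T2 : Finset (Sym2 V)} {u v : V}
    (h1 : IsTreeOn A T1) (h2 : IsTreeOn A T2) (hu : u ∈ A) (hv : v ∈ A) (huv : u ≠ v)
    (he2 : s(u, v) ∈ T2) (he1 : s(u, v) ∉ T1) :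
    ∃ x ∈ T1, x ∉ T2 ∧ IsTreeOn A (insert s(u, v) (T1.erase x)) ∧
      IsTreeOn A (insert x (T2.erase s(u, v))) := by
  classical
  set e := s(u, v) with hedef
  set T₂ := T2.erase e with hT₂def
  have hWv : ¬ reachT T₂ u v := not_reachT_erase h2 huv he2
  obtain ⟨a, b, hWa, hWb, hab, hxT1, hua, hbv⟩ :=
    exchange_cross (h1.reachT hu hv) (fun z => reachT T₂ u z) Relation.ReflTransGen.refl hWv
  set x := s(a, b) with hxdef
  set T₁ := T1.erase x with hT₁def
  have hxne : x ≠ e := fun hcon => he1 (hcon ▸ hxT1)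
  have hxT2 : x ∉ T2 := by
    intro hcon
    exact hWb (hWa.tail ⟨Finset.mem_erase.2 ⟨hxne, hcon⟩, hab⟩)
  have haA : a ∈ A := h1.1 _ hxT1 a (Sym2.mem_mk_left a b)
  have hbA : b ∈ A := h1.1 _ hxT1 b (Sym2.mem_mk_right a b)
  -- dichotomy for T₂
  have hdich : ∀ z ∈ A, reachT T₂ u z ∨ reachT T₂ v z := by
    intro z hz
    rcases reachT_erase T2 u v (h2.reachT hu hz) with h' | ⟨_, h'⟩ | ⟨h', _⟩
    · exact Or.inl h'
    · exact Or.inr h'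
    · exact absurd h' hWv
  have hcard1 : T1.card = A.card - 1 := by have := h1.2.2.1; omega
  have hApos : 0 < A.card := Finset.card_pos.2 ⟨u, hu⟩
  have hT1pos : 0 < T1.card := Finset.card_pos.2 ⟨x, hxT1⟩
  refine ⟨x, hxT1, hxT2, ?_, ?_⟩
  · -- T1' = insert e (T1.erase x)
    refine isTreeOn_of_base hu ?_ ?_ ?_ ?_
    · intro e' he' y hy
      rcases Finset.mem_insert.1 he' with rfl | he'
      · rw [hedef, Sym2.mem_iff] at hy
        rcases hy with rfl | rfl
        · exact hu
        · exact hv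
      · exact h1.1 _ (Finset.mem_of_mem_erase he') y hy
    · intro e' he'
      rcases Finset.mem_insert.1 he' with rfl | he'
      · rw [hedef, Sym2.mk_isDiag_iff]
        exact huv
      · exact h1.2.1 _ (Finset.mem_of_mem_erase he')
    · have hnm : e ∉ T1.erase x := fun hcon => he1 (Finset.mem_of_mem_erase hcon)
      rw [Finset.card_insert_of_notMem hnm, Finset.card_erase_of_mem hxT1]
      have := h1.2.2.1
      omega
    · intro z hz
      have hsub : T₁ ⊆ insert e T₁ := Finset.subset_insert _ _
      have huv' : reachT (insert e T₁) u v :=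
        Relation.ReflTransGen.single ⟨Finset.mem_insert_self _ _, huv⟩
      rcases reachT_erase T1 a b (h1.reachT hu hz) with h' | ⟨_, hbz⟩ | ⟨_, haz⟩
      · exact h'.mono hsub
      · exact (huv'.trans ((hbv.symm.mono hsub))).trans (hbz.mono hsub)
      · exact ((hua.mono hsub)).trans (haz.mono hsub)
  · -- T2' = insert x (T2.erase e)
    refine isTreeOn_of_base hu ?_ ?_ ?_ ?_
    · intro e' he' y hy
      rcases Finset.mem_insert.1 he' with rfl | he'
      · rw [hxdef, Sym2.mem_iff] at hy
        rcases hy with rfl | rfl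
        · exact haA
        · exact hbA
      · exact h2.1 _ (Finset.mem_of_mem_erase he') y hy
    · intro e' he'
      rcases Finset.mem_insert.1 he' with rfl | he'
      · rw [hxdef, Sym2.mk_isDiag_iff]
        exact hab
      · exact h2.2.1 _ (Finset.mem_of_mem_erase he')
    · have hnm : x ∉ T2.erase e := fun hcon => hxT2 (Finset.mem_of_mem_erase hcon)
      rw [Finset.card_insert_of_notMem hnm, Finset.card_erase_of_mem he2]
      have := h2.2.2.1
      have := Finset.card_pos.2 ⟨_, he2⟩
      omega
    · intro z hz
      have hsub : T₂ ⊆ insert x T₂ := Finset.subset_insert _ _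
      have hvb : reachT T₂ v b := by
        rcases hdich b hbA with h' | h'
        · exact absurd h' hWb
        · exact h'
      have huv' : reachT (insert x T₂) u v :=
        ((hWa.mono hsub).tail ⟨Finset.mem_insert_self _ _, hab⟩).trans (hvb.symm.mono hsub)
      rcases reachT_erase T2 u v (h2.reachT hu hz) with h' | ⟨_, hvz⟩ | ⟨h', _⟩
      · exact h'.mono hsub
      · exact huv'.trans (hvz.mono hsub)
      · exact absurd h' hWv

/-- Existence of a spanning tree (a star). -/
lemma exists_isTreeOn {A : Finset V} {a : V} (ha : a ∈ A) : ∃ T, IsTreeOn A T := by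
  classical
  refine ⟨(A.erase a).image (fun z => s(a, z)), isTreeOn_of_base ha ?_ ?_ ?_ ?_⟩
  · intro e he y hy
    obtain ⟨z, hz, rfl⟩ := Finset.mem_image.1 he
    rw [Sym2.mem_iff] at hy
    rcases hy with rfl | rfl
    · exact ha
    · exact Finset.mem_of_mem_erase hz
  · intro e he
    obtain ⟨z, hz, rfl⟩ := Finset.mem_image.1 he
    rw [Sym2.mk_isDiag_iff]
    exact fun hcon => (Finset.mem_erase.1 hz).1 hcon.symm
  · rw [Finset.card_image_of_injOn, Finset.card_erase_of_mem ha]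
    · have := Finset.card_pos.2 ⟨a, ha⟩
      omega
    · intro z hz z' hz' hzz
      rw [Sym2.eq_iff] at hzz
      rcases hzz with ⟨_, h⟩ | ⟨h, h'⟩
      · exact h
      · exact absurd h.symm (Finset.mem_erase.1 hz').1
  · intro z hz
    by_cases hza : z = a
    · exact hza ▸ Relation.ReflTransGen.refl
    · exact Relation.ReflTransGen.single
        ⟨Finset.mem_image.2 ⟨z, Finset.mem_erase.2 ⟨hza, hz⟩, rfl⟩, fun h => hza h.symm⟩

end SaveAux3

/-- Let `M` be the weighted complete graph on the terminal set `R`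
(weights `w`), let `u ≠ v` be terminals and let `M_e` be `M` with an additional
parallel edge `{u,v}` of arbitrary nonnegative cost `de` (modeled by lowering the
weight of the pair `{u,v}` to `min (w {u,v}) de`).  Then for every full component,
i.e. for every terminal set `S ⊆ R`, we have `save(M, C) ≥ save(M_e, C)`. -/
theorem save_monotone_add_edge
    (w : Sym2 V → ℝ) (hw : ∀ e, 0 ≤ w e)
    (R : Finset V) (u v : V) (hu : u ∈ R) (hv : v ∈ R) (huv : u ≠ v)
    (de : ℝ) (hde : 0 ≤ de)
    (S : Finset V) (hS : S ⊆ R) :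
    saveOn (fun e => if e = s(u, v) then min (w e) de else w e) R S ≤ saveOn w R S := by
  classical
  set W' : Sym2 V → ℝ := fun x => if x = s(u, v) then min (w x) de else w x with hW'
  show saveOn W' R S ≤ saveOn w R S
  rw [saveOn, saveOn]
  set ec : Sym2 V := s(u, v) with hec
  -- basic facts about the weights
  have hW'le : ∀ x, W' x ≤ w x := by
    intro x
    simp only [hW']
    by_cases hx : x = ec
    · rw [if_pos hx]; exact min_le_left _ _
    · rw [if_neg hx]
  have hW'eq : ∀ x, x ≠ ec → W' x = w x := by
    intro x hx
    simp only [hW']; rw [if_neg hx]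
  have hW'e : W' ec = min (w ec) de := by simp [hW']
  have hW'0 : ∀ x, 0 ≤ W' x := by
    intro x
    simp only [hW']
    by_cases hx : x = ec
    · rw [if_pos hx]; exact le_min (hw x) hde
    · rw [if_neg hx]; exact hw x
  have hcw0 : ∀ (ω : Sym2 V → ℝ), (∀ x, 0 ≤ ω x) → ∀ x, 0 ≤ contractWeight ω S x := by
    intro ω hω x
    by_cases hx : x ∈ Rpairs S
    · rw [contractWeight, if_pos hx]
    · rw [contractWeight, if_neg hx]; exact hω x
  have hcwle : ∀ x, contractWeight w S x ≤ w x := by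
    intro x
    by_cases hx : x ∈ Rpairs S
    · rw [contractWeight, if_pos hx]; exact hw x
    · rw [contractWeight, if_neg hx]
  -- generic MST facts
  obtain ⟨T0, hT0⟩ := exists_isTreeOn hu
  have hne : ∀ ω : Sym2 V → ℝ, (edgeCost ω '' {T | IsTreeOn R T}).Nonempty :=
    fun ω => ⟨_, ⟨T0, hT0, rfl⟩⟩
  have hbdd : ∀ ω : Sym2 V → ℝ, (∀ x, 0 ≤ ω x) →
      BddBelow (edgeCost ω '' {T | IsTreeOn R T}) := by
    intro ω hω
    refine ⟨0, ?_⟩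
    rintro r ⟨T, _, rfl⟩
    exact Finset.sum_nonneg (fun i _ => hω i)
  have hmle : ∀ ω : Sym2 V → ℝ, (∀ x, 0 ≤ ω x) → ∀ T, IsTreeOn R T →
      mstCostOn ω R ≤ edgeCost ω T :=
    fun ω hω T hT => csInf_le (hbdd ω hω) ⟨T, hT, rfl⟩
  -- the key pointwise inequality
  have key : ∀ T1, IsTreeOn R T1 → ∀ T2, IsTreeOn R T2 →
      mstCostOn W' R + mstCostOn (contractWeight w S) R ≤
        edgeCost w T1 + edgeCost (contractWeight W' S) T2 := by
    intro T1 hT1 T2 hT2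
    by_cases hP : ec ∈ Rpairs S
    · -- contracted weights coincide
      have hcc : contractWeight W' S = contractWeight w S := by
        funext x
        by_cases hx : x ∈ Rpairs S
        · rw [contractWeight, contractWeight, if_pos hx, if_pos hx]
        · have hxe : x ≠ ec := fun h => hx (h ▸ hP)
          rw [contractWeight, contractWeight, if_neg hx, if_neg hx, hW'eq x hxe]
      have m1 : mstCostOn W' R ≤ edgeCost W' T1 := hmle W' hW'0 T1 hT1
      have m2 : mstCostOn (contractWeight w S) R ≤ edgeCost (contractWeight w S) T2 :=
        hmle _ (hcw0 w hw) T2 hT2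
      have s1 : edgeCost W' T1 ≤ edgeCost w T1 :=
        Finset.sum_le_sum (fun i _ => hW'le i)
      rw [hcc]
      linarith
    · -- ec not contracted
      have hcwe : contractWeight w S ec = w ec := by rw [contractWeight, if_neg hP]
      have hcw'e : contractWeight W' S ec = W' ec := by rw [contractWeight, if_neg hP]
      have hagree : ∀ x, x ≠ ec → contractWeight W' S x = contractWeight w S x := by
        intro x hx
        by_cases hxP : x ∈ Rpairs S
        · rw [contractWeight, contractWeight, if_pos hxP, if_pos hxP]
        · rw [contractWeight, contractWeight, if_neg hxP, if_neg hxP, hW'eq x hx]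
      by_cases h2e : ec ∈ T2
      · by_cases h1e : ec ∈ T1
        · -- both trees contain ec : the changes cancel
          have m1 : mstCostOn W' R ≤ edgeCost W' T1 := hmle W' hW'0 T1 hT1
          have m2 : mstCostOn (contractWeight w S) R ≤ edgeCost (contractWeight w S) T2 :=
            hmle _ (hcw0 w hw) T2 hT2
          have e1 : W' ec + ∑ x ∈ T1.erase ec, W' x = edgeCost W' T1 :=
            Finset.add_sum_erase _ _ h1e
          have e2 : w ec + ∑ x ∈ T1.erase ec, w x = edgeCost w T1 :=
            Finset.add_sum_erase _ _ h1e
          have e3 : ∑ x ∈ T1.erase ec, W' x = ∑ x ∈ T1.erase ec, w x :=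
            Finset.sum_congr rfl (fun x hx => hW'eq x (Finset.mem_erase.1 hx).1)
          have e4 : contractWeight w S ec + ∑ x ∈ T2.erase ec, contractWeight w S x =
              edgeCost (contractWeight w S) T2 := Finset.add_sum_erase _ _ h2e
          have e5 : contractWeight W' S ec + ∑ x ∈ T2.erase ec, contractWeight W' S x =
              edgeCost (contractWeight W' S) T2 := Finset.add_sum_erase _ _ h2e
          have e6 : ∑ x ∈ T2.erase ec, contractWeight W' S x =
              ∑ x ∈ T2.erase ec, contractWeight w S x :=
            Finset.sum_congr rfl (fun x hx => hagree x (Finset.mem_erase.1 hx).1)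
          have hm : W' ec ≤ w ec := hW'le ec
          linarith
        · -- exchange an edge between the two trees
          obtain ⟨x, hx1, hx2, hTree1, hTree2⟩ :=
            tree_exchange hT1 hT2 hu hv huv h2e h1e
          have m1 : mstCostOn W' R ≤ edgeCost W' (insert ec (T1.erase x)) :=
            hmle W' hW'0 _ hTree1
          have m2 : mstCostOn (contractWeight w S) R ≤
              edgeCost (contractWeight w S) (insert x (T2.erase ec)) :=
            hmle _ (hcw0 w hw) _ hTree2
          have hecnm : ec ∉ T1.erase x := fun h => h1e (Finset.mem_of_mem_erase h)
          have hxnm : x ∉ T2.erase ec := fun h => hx2 (Finset.mem_of_mem_erase h)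
          have s1 : edgeCost W' (insert ec (T1.erase x)) =
              W' ec + ∑ y ∈ T1.erase x, W' y := Finset.sum_insert hecnm
          have s2 : ∑ y ∈ T1.erase x, W' y = ∑ y ∈ T1.erase x, w y :=
            Finset.sum_congr rfl (fun y hy => hW'eq y
              (fun h => h1e (h ▸ Finset.mem_of_mem_erase hy)))
          have s3 : w x + ∑ y ∈ T1.erase x, w y = edgeCost w T1 :=
            Finset.add_sum_erase _ _ hx1
          have s4 : edgeCost (contractWeight w S) (insert x (T2.erase ec)) =
              contractWeight w S x + ∑ y ∈ T2.erase ec, contractWeight w S y :=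
            Finset.sum_insert hxnm
          have s5 : contractWeight W' S ec + ∑ y ∈ T2.erase ec, contractWeight W' S y =
              edgeCost (contractWeight W' S) T2 := Finset.add_sum_erase _ _ h2e
          have s6 : ∑ y ∈ T2.erase ec, contractWeight W' S y =
              ∑ y ∈ T2.erase ec, contractWeight w S y :=
            Finset.sum_congr rfl (fun y hy => hagree y (Finset.mem_erase.1 hy).1)
          have hcwx : contractWeight w S x ≤ w x := hcwle x
          have hwm : W' ec ≤ w ec := hW'le ec
          rw [hcw'e] at s5
          linarith
      · -- ec not in T2
        have m1 : mstCostOn W' R ≤ edgeCost W' T1 := hmle W' hW'0 T1 hT1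
        have m2 : mstCostOn (contractWeight w S) R ≤ edgeCost (contractWeight w S) T2 :=
          hmle _ (hcw0 w hw) T2 hT2
        have s1 : edgeCost W' T1 ≤ edgeCost w T1 :=
          Finset.sum_le_sum (fun i _ => hW'le i)
        have s2 : edgeCost (contractWeight w S) T2 = edgeCost (contractWeight W' S) T2 :=
          Finset.sum_congr rfl (fun y hy => (hagree y (fun h => h2e (h ▸ hy))).symm)
        linarith
  -- now infimize
  have step1 : ∀ T2, IsTreeOn R T2 →
      mstCostOn W' R + mstCostOn (contractWeight w S) R ≤
        mstCostOn w R + edgeCost (contractWeight W' S) T2 := by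
    intro T2 hT2
    have h' : mstCostOn W' R + mstCostOn (contractWeight w S) R -
        edgeCost (contractWeight W' S) T2 ≤ mstCostOn w R := by
      refine le_csInf (hne w) ?_
      rintro r ⟨T1, hT1, rfl⟩
      have := key T1 hT1 T2 hT2
      linarith
    linarith
  have step2 : mstCostOn W' R + mstCostOn (contractWeight w S) R - mstCostOn w R ≤
      mstCostOn (contractWeight W' S) R := by
    refine le_csInf (hne _) ?_
    rintro r ⟨T2, hT2, rfl⟩
    have := step1 T2 hT2
    linarith
  linarith
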